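/- arXiv:2407.00762 — 2 statements merged into one kernel-verified Lean document; each statement's English description precedes it below -/
import Mathlib

section
/- For the multi-attacker feasible set A = { (p₁,…,p_m) : ‖p_j − a_j‖/ν_j ≤ Σ_{k=1}^{j} ‖p_k − p_{k−1}‖ for all j ≤ m }, with p₀ = d and all ν_j ∈ (0,1): A is bounded. Concretely, if ‖(p₁,…,p_m)‖ → ∞ along feasible points this leads to a contradiction; equivalently there exists R > 0 (depending on a₁,…,a_m, d, ν₁,…,ν_m) such that every feasible tuple satisfies ‖p_j‖ ≤ R for all j. -/
noncomputable def waypoint {n m : ℕ} (d : EuclideanSpace ℝ (Fin n))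
    (p : Fin m → EuclideanSpace ℝ (Fin n)) : ℕ → EuclideanSpace ℝ (Fin n)
  | 0 => d
  | (i + 1) => if h : i < m then p ⟨i, h⟩ else 0

noncomputable def defenderTime {n m : ℕ} (d : EuclideanSpace ℝ (Fin n))
    (p : Fin m → EuclideanSpace ℝ (Fin n)) (j : ℕ) : ℝ :=
  ∑ k ∈ Finset.range (j + 1), ‖waypoint d p (k + 1) - waypoint d p k‖

noncomputable def boundSeq (r s : ℝ) : ℕ → ℝ
  | 0 => s
  | (j + 1) => r * boundSeq r s j + s

lemma boundSeq_nonneg {r s : ℝ} (hr : 0 ≤ r) (hs : 0 ≤ s) : ∀ j, 0 ≤ boundSeq r s j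
  | 0 => hs
  | (j + 1) => by
      have h := boundSeq_nonneg hr hs j
      simp only [boundSeq]
      nlinarith [mul_nonneg hr h]

lemma boundSeq_mono {r s : ℝ} (hr : 1 ≤ r) (hs : 0 ≤ s) : Monotone (boundSeq r s) := by
  apply monotone_nat_of_le_succ
  intro j
  have h0 := boundSeq_nonneg (le_trans zero_le_one hr) hs j
  have h1 : boundSeq r s j ≤ r * boundSeq r s j := le_mul_of_one_le_left h0 hr
  simp only [boundSeq]
  linarith

theorem multi_attacker_feasible_set_bounded
    (n m : ℕ) (a : Fin m → EuclideanSpace ℝ (Fin n))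
    (ν : Fin m → ℝ) (hν : ∀ i, ν i ∈ Set.Ioo (0:ℝ) 1)
    (d : EuclideanSpace ℝ (Fin n)) :
    ∃ R : ℝ, 0 < R ∧
      ∀ p : Fin m → EuclideanSpace ℝ (Fin n),
        (∀ j : Fin m, ‖p j - a j‖ / ν j - defenderTime d p j ≤ 0) →
        ∀ j : Fin m, ‖p j‖ ≤ R := by
  rcases Nat.eq_zero_or_pos m with hm | hm
  · subst hm
    exact ⟨1, one_pos, fun p _ j => j.elim0⟩
  have hne : (Finset.univ : Finset (Fin m)).Nonempty := ⟨⟨0, hm⟩, Finset.mem_univ _⟩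
  set ν₀ := Finset.univ.sup' hne ν with hν₀def
  have hν₀lt : ν₀ < 1 := by
    rw [hν₀def, Finset.sup'_lt_iff hne]
    intro i _
    exact (hν i).2
  have hν₀pos : (0:ℝ) < ν₀ :=
    lt_of_lt_of_le (hν ⟨0, hm⟩).1 (Finset.le_sup' ν (Finset.mem_univ _))
  have hνle : ∀ i, ν i ≤ ν₀ := fun i => Finset.le_sup' ν (Finset.mem_univ i)
  set C := Finset.univ.sup' hne (fun i => ‖a i‖) with hCdef
  have hC : ∀ i, ‖a i‖ ≤ C := fun i => Finset.le_sup' (fun i => ‖a i‖) (Finset.mem_univ i)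
  have hC0 : (0:ℝ) ≤ C := le_trans (norm_nonneg _) (hC ⟨0, hm⟩)
  have h1ν : (0:ℝ) < 1 - ν₀ := by linarith
  set D := 2 * C + ‖d‖ + 1 with hDdef
  have hD : (0:ℝ) < D := by positivity
  set r := (1 + ν₀) / (1 - ν₀) with hrdef
  set s := D / (1 - ν₀) with hsdef
  have hr1 : (1:ℝ) ≤ r := by
    rw [hrdef, le_div_iff₀ h1ν]; linarith
  have hs0 : (0:ℝ) < s := div_pos hD h1ν
  have hB0 : ∀ j, 0 ≤ boundSeq r s j :=
    boundSeq_nonneg (le_trans zero_le_one hr1) hs0.le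
  refine ⟨C + boundSeq r s m + 1, by have := hB0 m; linarith, ?_⟩
  intro p hp
  have hfeas : ∀ j : Fin m, ‖p j - a j‖ ≤ ν j * defenderTime d p j := by
    intro j
    have h := hp j
    have hνj := (hν j).1
    rw [sub_nonpos, div_le_iff₀ hνj] at h
    linarith [h]
  have hT0 : ∀ j, 0 ≤ defenderTime d p j :=
    fun j => Finset.sum_nonneg fun _ _ => norm_nonneg _
  have hw : ∀ i (h : i < m), waypoint d p (i + 1) = p ⟨i, h⟩ := fun i h => dif_pos h
  have hfeas' : ∀ j : Fin m, ‖p j - a j‖ ≤ ν₀ * defenderTime d p j := by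
    intro j
    calc ‖p j - a j‖ ≤ ν j * defenderTime d p j := hfeas j
      _ ≤ ν₀ * defenderTime d p j := mul_le_mul_of_nonneg_right (hνle j) (hT0 j)
  have key : ∀ i, i < m → defenderTime d p i ≤ boundSeq r s i := by
    intro i
    induction i with
    | zero =>
      intro h0
      have hT : defenderTime d p 0 = ‖p ⟨0, h0⟩ - d‖ := by
        simp [defenderTime, waypoint, h0]
      have htri : ‖p ⟨0, h0⟩ - d‖ ≤ ‖p ⟨0, h0⟩ - a ⟨0, h0⟩‖ + ‖a ⟨0, h0⟩ - d‖ :=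
        norm_sub_le_norm_sub_add_norm_sub _ _ _
      have hf := hfeas' ⟨0, h0⟩
      have had : ‖a ⟨0, h0⟩ - d‖ ≤ C + ‖d‖ :=
        le_trans (norm_sub_le _ _) (by linarith [hC ⟨0, h0⟩])
      have : (1 - ν₀) * defenderTime d p 0 ≤ D := by
        rw [hT] at *
        nlinarith
      have hs : defenderTime d p 0 ≤ s := by
        rw [hsdef, le_div_iff₀ h1ν]
        linarith [this]
      simpa [boundSeq] using hs
    | succ i ih =>
      intro hi1
      have hi : i < m := Nat.lt_of_succ_lt hi1
      have hstep : defenderTime d p (i + 1)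
          = defenderTime d p i + ‖p ⟨i + 1, hi1⟩ - p ⟨i, hi⟩‖ := by
        rw [defenderTime, Finset.sum_range_succ, hw (i+1) hi1, hw i hi]
        rfl
      have htri : ‖p ⟨i + 1, hi1⟩ - p ⟨i, hi⟩‖
          ≤ ‖p ⟨i + 1, hi1⟩ - a ⟨i + 1, hi1⟩‖ + ‖a ⟨i + 1, hi1⟩ - a ⟨i, hi⟩‖
            + ‖a ⟨i, hi⟩ - p ⟨i, hi⟩‖ := by
        have h1 : ‖p ⟨i + 1, hi1⟩ - p ⟨i, hi⟩‖
            ≤ ‖p ⟨i + 1, hi1⟩ - a ⟨i, hi⟩‖ + ‖a ⟨i, hi⟩ - p ⟨i, hi⟩‖ :=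
          norm_sub_le_norm_sub_add_norm_sub _ _ _
        have h2 : ‖p ⟨i + 1, hi1⟩ - a ⟨i, hi⟩‖
            ≤ ‖p ⟨i + 1, hi1⟩ - a ⟨i + 1, hi1⟩‖ + ‖a ⟨i + 1, hi1⟩ - a ⟨i, hi⟩‖ :=
          norm_sub_le_norm_sub_add_norm_sub _ _ _
        linarith
      have haa : ‖a ⟨i + 1, hi1⟩ - a ⟨i, hi⟩‖ ≤ 2 * C :=
        le_trans (norm_sub_le _ _) (by linarith [hC ⟨i + 1, hi1⟩, hC ⟨i, hi⟩])
      have hap : ‖a ⟨i, hi⟩ - p ⟨i, hi⟩‖ ≤ ν₀ * defenderTime d p i := by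
        rw [norm_sub_rev]; exact hfeas' ⟨i, hi⟩
      have hf := hfeas' ⟨i + 1, hi1⟩
      have hTi := ih hi
      have hBi := hB0 i
      have hrs : (1 - ν₀) * (r * boundSeq r s i + s) = (1 + ν₀) * boundSeq r s i + D := by
        rw [hrdef, hsdef]
        field_simp
      have hf2 : ‖p ⟨i + 1, hi1⟩ - a ⟨i + 1, hi1⟩‖ ≤ ν₀ * defenderTime d p (i + 1) := hf
      have hineq : (1 - ν₀) * defenderTime d p (i + 1)
          ≤ (1 + ν₀) * defenderTime d p i + D := by
        nlinarith [hstep, htri, haa, hap, hf2, hT0 (i+1 : ℕ), norm_nonneg d]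
      have : (1 - ν₀) * defenderTime d p (i + 1)
          ≤ (1 - ν₀) * (r * boundSeq r s i + s) := by
        rw [hrs]
        nlinarith [hν₀pos]
      have hfin : defenderTime d p (i + 1) ≤ r * boundSeq r s i + s :=
        le_of_mul_le_mul_left (by linarith [this]) h1ν
      simpa [boundSeq] using hfin
  intro j
  have h1 : ‖p j‖ ≤ ‖p j - a j‖ + ‖a j‖ := by
    have := norm_le_norm_add_norm_sub' (p j) (a j)
    linarith
  have h2 : ‖p j - a j‖ ≤ defenderTime d p j := by
    calc ‖p j - a j‖ ≤ ν₀ * defenderTime d p j := hfeas' j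
      _ ≤ 1 * defenderTime d p j := mul_le_mul_of_nonneg_right hν₀lt.le (hT0 j)
      _ = defenderTime d p j := one_mul _
  have h3 := key j.1 j.2
  have h4 : boundSeq r s j.1 ≤ boundSeq r s m := boundSeq_mono hr1 hs0.le j.2.le
  have h5 := hC j
  have : defenderTime d p j = defenderTime d p j.1 := rfl
  linarith [h1, h2, h3, h4, h5]
end

section
/- The multi-attacker feasible set A = { (p₁, p₂) ∈ ℝ² × ℝ² : ‖p₁ − a₁‖/ν₁ ≤ ‖p₁ − d‖ and ‖p₂ − a₂‖/ν₂ ≤ ‖p₁ − d‖ + ‖p₂ − p₁‖ } need not be convex: there exist a₁, a₂, d ∈ ℝ² and ν₁, ν₂ ∈ (0,1) and points P, Q ∈ A such that (P+Q)/2 ∉ A. -/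
noncomputable def v (x y : ℝ) : EuclideanSpace ℝ (Fin 2) := (WithLp.equiv 2 _).symm ![x, y]

lemma norm_v (x y : ℝ) : ‖v x y‖ = Real.sqrt (x^2 + y^2) := by
  rw [EuclideanSpace.norm_eq]
  simp [v, Fin.sum_univ_two, Real.norm_eq_abs, sq_abs]

lemma sub_v (a b c d : ℝ) : v a b - v c d = v (a - c) (b - d) := by
  ext i; fin_cases i <;> simp [v]

lemma add_v (a b c d : ℝ) : v a b + v c d = v (a + c) (b + d) := by
  ext i; fin_cases i <;> simp [v]

lemma smul_v (r a b : ℝ) : r • v a b = v (r * a) (r * b) := by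
  ext i; fin_cases i <;> simp [v]

lemma sqrt_val (a b : ℝ) (hb : 0 ≤ b) (h : a = b^2) : Real.sqrt a = b := by
  rw [h, Real.sqrt_sq hb]

theorem multi_attacker_feasible_set_not_convex :
    ∃ (a₁ a₂ d : EuclideanSpace ℝ (Fin 2)) (ν₁ ν₂ : ℝ),
      ν₁ ∈ Set.Ioo (0:ℝ) 1 ∧ ν₂ ∈ Set.Ioo (0:ℝ) 1 ∧
      ∃ P Q : EuclideanSpace ℝ (Fin 2) × EuclideanSpace ℝ (Fin 2),
        (‖P.1 - a₁‖ / ν₁ ≤ ‖P.1 - d‖ ∧ ‖P.2 - a₂‖ / ν₂ ≤ ‖P.1 - d‖ + ‖P.2 - P.1‖) ∧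
        (‖Q.1 - a₁‖ / ν₁ ≤ ‖Q.1 - d‖ ∧ ‖Q.2 - a₂‖ / ν₂ ≤ ‖Q.1 - d‖ + ‖Q.2 - Q.1‖) ∧
        ¬ (‖(2:ℝ)⁻¹ • (P.1 + Q.1) - a₁‖ / ν₁ ≤ ‖(2:ℝ)⁻¹ • (P.1 + Q.1) - d‖ ∧
           ‖(2:ℝ)⁻¹ • (P.2 + Q.2) - a₂‖ / ν₂ ≤
             ‖(2:ℝ)⁻¹ • (P.1 + Q.1) - d‖ + ‖(2:ℝ)⁻¹ • (P.2 + Q.2) - (2:ℝ)⁻¹ • (P.1 + Q.1)‖) := by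
  refine ⟨v 4 0, v (9/2) 0, v 0 0, 3/4, 1/2, ⟨by norm_num, by norm_num⟩,
    ⟨by norm_num, by norm_num⟩, (v 4 3, v 0 0), (v 4 (-3), v 0 0), ⟨?_, ?_⟩, ⟨?_, ?_⟩, ?_⟩
  · simp only [sub_v, norm_v]
    rw [sqrt_val (((4:ℝ)-4)^2+((3:ℝ)-0)^2) 3 (by norm_num) (by norm_num),
        sqrt_val (((4:ℝ)-0)^2+((3:ℝ)-0)^2) 5 (by norm_num) (by norm_num)]
    norm_num
  · simp only [sub_v, norm_v]
    rw [sqrt_val (((0:ℝ)-9/2)^2+((0:ℝ)-0)^2) (9/2) (by norm_num) (by norm_num),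
        sqrt_val (((4:ℝ)-0)^2+((3:ℝ)-0)^2) 5 (by norm_num) (by norm_num),
        sqrt_val (((0:ℝ)-4)^2+((0:ℝ)-3)^2) 5 (by norm_num) (by norm_num)]
    norm_num
  · simp only [sub_v, norm_v]
    rw [sqrt_val (((4:ℝ)-4)^2+((-3:ℝ)-0)^2) 3 (by norm_num) (by norm_num),
        sqrt_val (((4:ℝ)-0)^2+((-3:ℝ)-0)^2) 5 (by norm_num) (by norm_num)]
    norm_num
  · simp only [sub_v, norm_v]
    rw [sqrt_val (((0:ℝ)-9/2)^2+((0:ℝ)-0)^2) (9/2) (by norm_num) (by norm_num),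
        sqrt_val (((4:ℝ)-0)^2+((-3:ℝ)-0)^2) 5 (by norm_num) (by norm_num),
        sqrt_val (((0:ℝ)-4)^2+((0:ℝ)-(-3))^2) 5 (by norm_num) (by norm_num)]
    norm_num
  · rintro ⟨-, h⟩
    simp only [smul_v, add_v, sub_v, norm_v] at h
    rw [sqrt_val ((2⁻¹*((0:ℝ)+0)-9/2)^2+(2⁻¹*((0:ℝ)+0)-0)^2) (9/2) (by norm_num) (by norm_num),
        sqrt_val ((2⁻¹*((4:ℝ)+4)-0)^2+(2⁻¹*((3:ℝ)+-3)-0)^2) 4 (by norm_num) (by norm_num),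
        sqrt_val ((2⁻¹*((0:ℝ)+0)-2⁻¹*(4+4))^2+(2⁻¹*((0:ℝ)+0)-2⁻¹*(3+-3))^2) 4
          (by norm_num) (by norm_num)] at h
    norm_num at h
end
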